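/- Consider the trace regression model Yᵢ = tr(XᵢᵀA₀) + ξᵢ and the nuclear-norm penalized estimator Â^λ. Then for every m₁×m₂ matrix U with nuclear norm ‖U‖₁ = 1, |⟨Â^λ − A₀, U⟩_{L₂(Π)}| ≤ ‖M₁ + M₂‖∞ + λ/2; consequently, on the event {λ ≥ 3‖M₁ + M₂‖∞}, |⟨Â^λ − A₀, U⟩_{L₂(Π)}| ≤ (5/6)λ. -/

import Mathlib

open MeasureTheory ProbabilityTheory Matrix Real

noncomputable section

namespace MC

instance matMeasurableSpace {m n : Type*} : MeasurableSpace (Matrix m n ℝ) :=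
  inferInstanceAs (MeasurableSpace (m → n → ℝ))

/-- Trace inner product `⟨A,B⟩ = tr(Aᵀ B)`. -/
def mip {m₁ m₂ : ℕ} (A B : Matrix (Fin m₁) (Fin m₂) ℝ) : ℝ := (Aᵀ * B).trace

/-- Frobenius norm `‖A‖₂`. -/
def frob {m₁ m₂ : ℕ} (A : Matrix (Fin m₁) (Fin m₂) ℝ) : ℝ :=
  Real.sqrt (∑ i, ∑ j, (A i j) ^ 2)

/-- Euclidean norm of a vector. -/
def evnorm {m : ℕ} (v : Fin m → ℝ) : ℝ := Real.sqrt (∑ i, (v i) ^ 2)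

/-- Spectral norm `‖A‖_∞` (largest singular value), as the `ℓ₂ → ℓ₂` operator norm. -/
def spec {m₁ m₂ : ℕ} (A : Matrix (Fin m₁) (Fin m₂) ℝ) : ℝ :=
  sSup {r | ∃ x : Fin m₂ → ℝ, evnorm x ≤ 1 ∧ r = evnorm (A.mulVec x)}

/-- Nuclear norm `‖A‖₁` (sum of singular values), via trace duality with the spectral norm. -/
def nuc {m₁ m₂ : ℕ} (A : Matrix (Fin m₁) (Fin m₂) ℝ) : ℝ :=
  sSup {r | ∃ B : Matrix (Fin m₁) (Fin m₂) ℝ, spec B ≤ 1 ∧ r = mip A B}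

/-- Entrywise expectation of a random matrix. -/
def mE {Ω : Type*} [MeasurableSpace Ω] {k l : ℕ} (μ : Measure Ω)
    (Z : Ω → Matrix (Fin k) (Fin l) ℝ) : Matrix (Fin k) (Fin l) ℝ :=
  fun i j => ∫ ω, Z ω i j ∂μ

/-- `⟨A,B⟩_{L₂(Π)} = (1/n) Σᵢ E[⟨A,Xᵢ⟩⟨B,Xᵢ⟩]`. -/
def ipL2 {Ω : Type*} [MeasurableSpace Ω] {m₁ m₂ n : ℕ} (μ : Measure Ω)
    (X : Fin n → Ω → Matrix (Fin m₁) (Fin m₂) ℝ) (A B : Matrix (Fin m₁) (Fin m₂) ℝ) : ℝ :=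
  (1 / n) * ∑ i, ∫ ω, mip A (X i ω) * mip B (X i ω) ∂μ

/-- `‖A‖²_{L₂(Π)} = (1/n) Σᵢ E[⟨A,Xᵢ⟩²]`. -/
def nl2sq {Ω : Type*} [MeasurableSpace Ω] {m₁ m₂ n : ℕ} (μ : Measure Ω)
    (X : Fin n → Ω → Matrix (Fin m₁) (Fin m₂) ℝ) (A : Matrix (Fin m₁) (Fin m₂) ℝ) : ℝ :=
  ipL2 μ X A A

/-- `κ₁(Π) = inf{‖B‖_{L₂(Π)} : ‖B‖₂ = 1, rank(B) ≤ 1}`. -/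
def kappa1 {Ω : Type*} [MeasurableSpace Ω] {m₁ m₂ n : ℕ} (μ : Measure Ω)
    (X : Fin n → Ω → Matrix (Fin m₁) (Fin m₂) ℝ) : ℝ :=
  sInf {r | ∃ B : Matrix (Fin m₁) (Fin m₂) ℝ,
    frob B = 1 ∧ B.rank ≤ 1 ∧ r = Real.sqrt (nl2sq μ X B)}

/-- The coherence `ρ(Π) = sup{|⟨A,B⟩_{L₂(Π)}| / (‖A‖₁‖B‖₁) : A,B ≠ 0, ⟨A,B⟩ = 0}`. -/
def rho {Ω : Type*} [MeasurableSpace Ω] {m₁ m₂ n : ℕ} (μ : Measure Ω)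
    (X : Fin n → Ω → Matrix (Fin m₁) (Fin m₂) ℝ) : ℝ :=
  sSup {r | ∃ A B : Matrix (Fin m₁) (Fin m₂) ℝ, A ≠ 0 ∧ B ≠ 0 ∧ mip A B = 0 ∧
    r = |ipL2 μ X A B| / (nuc A * nuc B)}

/-- The observations `Yᵢ = tr(Xᵢᵀ A₀) + ξᵢ` of the trace regression model. -/
def Yobs {Ω : Type*} {m₁ m₂ n : ℕ} (X : Fin n → Ω → Matrix (Fin m₁) (Fin m₂) ℝ)
    (ξ : Fin n → Ω → ℝ) (A₀ : Matrix (Fin m₁) (Fin m₂) ℝ) (i : Fin n) (ω : Ω) : ℝ :=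
  mip A₀ (X i ω) + ξ i ω

/-- The objective function `‖A‖²_{L₂(Π)} - ⟨(2/n) Σᵢ Yᵢ Xᵢ, A⟩ + λ ‖A‖₁` of the
nuclear-norm penalized estimator, at a realization `ω`. -/
def obj {Ω : Type*} [MeasurableSpace Ω] {m₁ m₂ n : ℕ} (μ : Measure Ω)
    (X : Fin n → Ω → Matrix (Fin m₁) (Fin m₂) ℝ) (ξ : Fin n → Ω → ℝ)
    (A₀ : Matrix (Fin m₁) (Fin m₂) ℝ) (lam : ℝ) (ω : Ω)
    (A : Matrix (Fin m₁) (Fin m₂) ℝ) : ℝ :=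
  nl2sq μ X A - mip ((2 / (n : ℝ)) • ∑ i, Yobs X ξ A₀ i ω • X i ω) A + lam * nuc A

/-- The stochastic error matrix `M₁ = (1/n) Σᵢ ξᵢ Xᵢ`. -/
def M1 {Ω : Type*} {m₁ m₂ n : ℕ} (X : Fin n → Ω → Matrix (Fin m₁) (Fin m₂) ℝ)
    (ξ : Fin n → Ω → ℝ) (ω : Ω) : Matrix (Fin m₁) (Fin m₂) ℝ :=
  (1 / (n : ℝ)) • ∑ i, ξ i ω • X i ω

/-- The stochastic error matrix `M₂ = (1/n) Σᵢ (⟨A₀,Xᵢ⟩Xᵢ - E[⟨A₀,Xᵢ⟩Xᵢ])`. -/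
def M2 {Ω : Type*} [MeasurableSpace Ω] {m₁ m₂ n : ℕ} (μ : Measure Ω)
    (X : Fin n → Ω → Matrix (Fin m₁) (Fin m₂) ℝ) (A₀ : Matrix (Fin m₁) (Fin m₂) ℝ)
    (ω : Ω) : Matrix (Fin m₁) (Fin m₂) ℝ :=
  (1 / (n : ℝ)) • ∑ i, (mip A₀ (X i ω) • X i ω - mE μ (fun ω' => mip A₀ (X i ω') • X i ω'))

section Aux

variable {m₁ m₂ : ℕ}

lemma mip_eq (A B : Matrix (Fin m₁) (Fin m₂) ℝ) :
    mip A B = ∑ i, ∑ j, A i j * B i j := by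
  unfold mip
  rw [Matrix.trace]
  simp only [Matrix.diag_apply, Matrix.mul_apply, Matrix.transpose_apply]
  rw [Finset.sum_comm]

lemma mip_comm (A B : Matrix (Fin m₁) (Fin m₂) ℝ) : mip A B = mip B A := by
  simp [mip_eq, mul_comm]

lemma mip_add_left (A C B : Matrix (Fin m₁) (Fin m₂) ℝ) :
    mip (A + C) B = mip A B + mip C B := by
  simp [mip_eq, add_mul, Finset.sum_add_distrib]

lemma mip_sub_left (A C B : Matrix (Fin m₁) (Fin m₂) ℝ) :
    mip (A - C) B = mip A B - mip C B := by
  simp [mip_eq, sub_mul, Finset.sum_sub_distrib]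

lemma mip_smul_left (t : ℝ) (A B : Matrix (Fin m₁) (Fin m₂) ℝ) :
    mip (t • A) B = t * mip A B := by
  simp [mip_eq, Finset.mul_sum, mul_assoc]

lemma mip_zero_left (B : Matrix (Fin m₁) (Fin m₂) ℝ) : mip 0 B = 0 := by
  simp [mip_eq]

lemma mip_zero_right (B : Matrix (Fin m₁) (Fin m₂) ℝ) : mip B 0 = 0 := by
  simp [mip_eq]

lemma mip_add_right (A B C : Matrix (Fin m₁) (Fin m₂) ℝ) :
    mip A (B + C) = mip A B + mip A C := by
  rw [mip_comm, mip_add_left, mip_comm B A, mip_comm C A]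

lemma mip_smul_right (t : ℝ) (A B : Matrix (Fin m₁) (Fin m₂) ℝ) :
    mip A (t • B) = t * mip A B := by
  rw [mip_comm, mip_smul_left, mip_comm]

lemma mip_neg_right (A B : Matrix (Fin m₁) (Fin m₂) ℝ) :
    mip A (-B) = - mip A B := by
  simp [mip_eq]

lemma mip_sum_left {ι : Type*} (s : Finset ι) (f : ι → Matrix (Fin m₁) (Fin m₂) ℝ)
    (B : Matrix (Fin m₁) (Fin m₂) ℝ) :
    mip (∑ i ∈ s, f i) B = ∑ i ∈ s, mip (f i) B := by
  classical
  induction s using Finset.induction_on with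
  | empty => simp [mip_zero_left]
  | insert _ _ h ih => simp [Finset.sum_insert h, mip_add_left, ih]

lemma mip_single (j : Fin m₁) (k : Fin m₂) (B : Matrix (Fin m₁) (Fin m₂) ℝ) :
    mip (Matrix.single j k 1) B = B j k := by
  simp [mip_eq, Matrix.single, Matrix.of_apply, ite_and]

end Aux
section Norms

variable {m m₁ m₂ : ℕ}

lemma evnorm_nonneg (v : Fin m → ℝ) : 0 ≤ evnorm v := Real.sqrt_nonneg _

lemma evnorm_neg (v : Fin m → ℝ) : evnorm (-v) = evnorm v := by
  simp [evnorm]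

lemma evnorm_zero : evnorm (0 : Fin m → ℝ) = 0 := by simp [evnorm]

lemma evnorm_smul (c : ℝ) (v : Fin m → ℝ) : evnorm (c • v) = |c| * evnorm v := by
  unfold evnorm
  rw [← Real.sqrt_sq_eq_abs, ← Real.sqrt_mul (sq_nonneg c)]
  congr 1
  rw [Finset.mul_sum]
  exact Finset.sum_congr rfl fun i _ => by simp [mul_pow]

lemma abs_le_evnorm (v : Fin m → ℝ) (i : Fin m) : |v i| ≤ evnorm v := by
  rw [← Real.sqrt_sq_eq_abs]
  exact Real.sqrt_le_sqrt (Finset.single_le_sum (fun j _ => sq_nonneg (v j))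
    (Finset.mem_univ i))

lemma evnorm_single (j : Fin m) : evnorm (Pi.single j (1:ℝ)) = 1 := by
  unfold evnorm
  have h : ∑ i, (Pi.single (M := fun _ => ℝ) j 1 i) ^ 2 = 1 := by
    simp [Pi.single_apply]
  rw [h, Real.sqrt_one]

lemma sq_sum_le_one_of_evnorm_le_one {x : Fin m → ℝ} (hx : evnorm x ≤ 1) :
    ∑ i, (x i) ^ 2 ≤ 1 := by
  have h0 : 0 ≤ ∑ i, (x i) ^ 2 := Finset.sum_nonneg fun i _ => sq_nonneg _
  have hx' : Real.sqrt (∑ i, (x i) ^ 2) ≤ 1 := hx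
  calc ∑ i, (x i) ^ 2 = Real.sqrt (∑ i, (x i) ^ 2) ^ 2 := (Real.sq_sqrt h0).symm
    _ ≤ 1 := by nlinarith [Real.sqrt_nonneg (∑ i, (x i) ^ 2), hx']

lemma evnorm_mulVec_le (A : Matrix (Fin m₁) (Fin m₂) ℝ) {x : Fin m₂ → ℝ}
    (hx : evnorm x ≤ 1) : evnorm (A.mulVec x) ≤ frob A := by
  unfold evnorm frob
  apply Real.sqrt_le_sqrt
  have hxs := sq_sum_le_one_of_evnorm_le_one hx
  have key : ∀ i, (A.mulVec x i) ^ 2 ≤ (∑ j, (A i j) ^ 2) := by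
    intro i
    have h1 : (A.mulVec x i) ^ 2 ≤ (∑ j, (A i j) ^ 2) * (∑ j, (x j) ^ 2) := by
      have := Finset.sum_mul_sq_le_sq_mul_sq Finset.univ (fun j => A i j) (fun j => x j)
      simpa [Matrix.mulVec, dotProduct] using this
    have h2 : (∑ j, (A i j) ^ 2) * (∑ j, (x j) ^ 2) ≤ (∑ j, (A i j) ^ 2) * 1 :=
      mul_le_mul_of_nonneg_left hxs (Finset.sum_nonneg fun j _ => sq_nonneg _)
    linarith
  calc ∑ i, (A.mulVec x i) ^ 2 ≤ ∑ i, ∑ j, (A i j) ^ 2 :=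
        Finset.sum_le_sum fun i _ => key i
    _ = _ := rfl

lemma spec_bddAbove (A : Matrix (Fin m₁) (Fin m₂) ℝ) :
    BddAbove {r | ∃ x : Fin m₂ → ℝ, evnorm x ≤ 1 ∧ r = evnorm (A.mulVec x)} := by
  refine ⟨frob A, ?_⟩
  rintro r ⟨x, hx, rfl⟩
  exact evnorm_mulVec_le A hx

lemma spec_nonempty (A : Matrix (Fin m₁) (Fin m₂) ℝ) :
    Set.Nonempty {r | ∃ x : Fin m₂ → ℝ, evnorm x ≤ 1 ∧ r = evnorm (A.mulVec x)} :=
  ⟨evnorm (A.mulVec 0), 0, by simp [evnorm_zero], rfl⟩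

lemma evnorm_mulVec_le_spec (A : Matrix (Fin m₁) (Fin m₂) ℝ) {x : Fin m₂ → ℝ}
    (hx : evnorm x ≤ 1) : evnorm (A.mulVec x) ≤ spec A :=
  le_csSup (spec_bddAbove A) ⟨x, hx, rfl⟩

lemma spec_nonneg (A : Matrix (Fin m₁) (Fin m₂) ℝ) : 0 ≤ spec A :=
  le_trans (evnorm_nonneg _) (evnorm_mulVec_le_spec A (x := 0) (by simp [evnorm_zero]))

lemma abs_entry_le_spec (A : Matrix (Fin m₁) (Fin m₂) ℝ) (i : Fin m₁) (j : Fin m₂) :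
    |A i j| ≤ spec A := by
  have h1 : A.mulVec (Pi.single j 1) i = A i j := by
    simp [Matrix.mulVec, dotProduct, Pi.single_apply]
  calc |A i j| = |A.mulVec (Pi.single j 1) i| := by rw [h1]
    _ ≤ evnorm (A.mulVec (Pi.single j 1)) := abs_le_evnorm _ i
    _ ≤ spec A := evnorm_mulVec_le_spec A (le_of_eq (evnorm_single j))

lemma spec_neg (A : Matrix (Fin m₁) (Fin m₂) ℝ) : spec (-A) = spec A := by
  unfold spec
  congr 1
  ext r
  constructor
  · rintro ⟨x, hx, rfl⟩
    exact ⟨x, hx, by rw [Matrix.neg_mulVec, evnorm_neg]⟩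
  · rintro ⟨x, hx, rfl⟩
    exact ⟨x, hx, by rw [Matrix.neg_mulVec, evnorm_neg]⟩

lemma spec_zero_le_one : spec (0 : Matrix (Fin m₁) (Fin m₂) ℝ) ≤ 1 := by
  apply csSup_le (spec_nonempty 0)
  rintro r ⟨x, hx, rfl⟩
  simp [Matrix.zero_mulVec, evnorm_zero]

lemma spec_inv_smul_le_one (M : Matrix (Fin m₁) (Fin m₂) ℝ) (h : 0 < spec M) :
    spec ((spec M)⁻¹ • M) ≤ 1 := by
  apply csSup_le (spec_nonempty _)
  rintro r ⟨x, hx, rfl⟩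
  rw [Matrix.smul_mulVec, evnorm_smul, abs_of_pos (inv_pos.2 h)]
  rw [inv_mul_le_iff₀ h, mul_one]
  exact evnorm_mulVec_le_spec M hx

lemma nuc_bddAbove (A : Matrix (Fin m₁) (Fin m₂) ℝ) :
    BddAbove {r | ∃ B : Matrix (Fin m₁) (Fin m₂) ℝ, spec B ≤ 1 ∧ r = mip A B} := by
  refine ⟨∑ i, ∑ j, |A i j|, ?_⟩
  rintro r ⟨B, hB, rfl⟩
  rw [mip_eq]
  calc ∑ i, ∑ j, A i j * B i j ≤ ∑ i, ∑ j, |A i j| := by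
        apply Finset.sum_le_sum; intro i _
        apply Finset.sum_le_sum; intro j _
        calc A i j * B i j ≤ |A i j * B i j| := le_abs_self _
          _ = |A i j| * |B i j| := abs_mul _ _
          _ ≤ |A i j| * 1 := mul_le_mul_of_nonneg_left
              (le_trans (abs_entry_le_spec B i j) hB) (abs_nonneg _)
          _ = |A i j| := mul_one _

lemma nuc_nonempty (A : Matrix (Fin m₁) (Fin m₂) ℝ) :
    Set.Nonempty {r | ∃ B : Matrix (Fin m₁) (Fin m₂) ℝ, spec B ≤ 1 ∧ r = mip A B} :=
  ⟨mip A 0, 0, spec_zero_le_one, rfl⟩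

lemma mip_le_nuc {A B : Matrix (Fin m₁) (Fin m₂) ℝ} (hB : spec B ≤ 1) :
    mip A B ≤ nuc A :=
  le_csSup (nuc_bddAbove A) ⟨B, hB, rfl⟩

lemma abs_mip_le_nuc {A B : Matrix (Fin m₁) (Fin m₂) ℝ} (hB : spec B ≤ 1) :
    |mip A B| ≤ nuc A := by
  rw [abs_le]
  constructor
  · have := mip_le_nuc (A := A) (B := -B) (by rw [spec_neg]; exact hB)
    rw [mip_neg_right] at this
    linarith
  · exact mip_le_nuc hB

lemma nuc_add_smul_le (A U : Matrix (Fin m₁) (Fin m₂) ℝ) (t : ℝ) :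
    nuc (A + t • U) ≤ nuc A + |t| * nuc U := by
  apply csSup_le (nuc_nonempty _)
  rintro r ⟨B, hB, rfl⟩
  rw [mip_add_left, mip_smul_left]
  have h1 : mip A B ≤ nuc A := mip_le_nuc hB
  have h2 : t * mip U B ≤ |t| * nuc U := by
    calc t * mip U B ≤ |t * mip U B| := le_abs_self _
      _ = |t| * |mip U B| := abs_mul _ _
      _ ≤ |t| * nuc U := mul_le_mul_of_nonneg_left (abs_mip_le_nuc hB) (abs_nonneg _)
  linarith

lemma abs_mip_le_spec_of_nuc_one {U : Matrix (Fin m₁) (Fin m₂) ℝ} (hU : nuc U = 1)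
    (M : Matrix (Fin m₁) (Fin m₂) ℝ) : |mip U M| ≤ spec M := by
  rcases (spec_nonneg M).eq_or_lt with h | h
  · have hM : M = 0 := by
      ext i j
      have := abs_entry_le_spec M i j
      rw [← h] at this
      simpa using abs_nonpos_iff.mp (by linarith [abs_nonneg (M i j)])
    rw [hM, mip_zero_right, abs_zero]
    exact spec_nonneg 0
  · have hB : spec ((spec M)⁻¹ • M) ≤ 1 := spec_inv_smul_le_one M h
    have h1 : |mip U ((spec M)⁻¹ • M)| ≤ 1 := hU ▸ abs_mip_le_nuc hB
    rw [mip_smul_right, abs_mul, abs_of_pos (inv_pos.2 h)] at h1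
    rw [inv_mul_le_iff₀ h, mul_one] at h1
    exact h1

end Norms
section L2

variable {Ω : Type*} [MeasurableSpace Ω] {m₁ m₂ n : ℕ} (μ : Measure Ω)
  (X : Fin n → Ω → Matrix (Fin m₁) (Fin m₂) ℝ)

lemma ipL2_comm (A B : Matrix (Fin m₁) (Fin m₂) ℝ) :
    ipL2 μ X A B = ipL2 μ X B A := by
  unfold ipL2
  congr 1
  exact Finset.sum_congr rfl fun i _ => by
    congr 1; funext ω; ring

lemma ipL2_smul_left (t : ℝ) (A B : Matrix (Fin m₁) (Fin m₂) ℝ) :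
    ipL2 μ X (t • A) B = t * ipL2 μ X A B := by
  unfold ipL2
  have h : ∀ i, (∫ ω, mip (t • A) (X i ω) * mip B (X i ω) ∂μ)
      = t * ∫ ω, mip A (X i ω) * mip B (X i ω) ∂μ := by
    intro i
    rw [← MeasureTheory.integral_const_mul]
    congr 1; funext ω
    rw [mip_smul_left]; ring
  simp only [h, Finset.mul_sum]
  apply Finset.sum_congr rfl
  intro i _
  ring

variable (hInt : ∀ (i : Fin n) (A B : Matrix (Fin m₁) (Fin m₂) ℝ),
      Integrable (fun ω => mip A (X i ω) * mip B (X i ω)) μ)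

include hInt

lemma ipL2_add_left (A C B : Matrix (Fin m₁) (Fin m₂) ℝ) :
    ipL2 μ X (A + C) B = ipL2 μ X A B + ipL2 μ X C B := by
  unfold ipL2
  rw [← mul_add, ← Finset.sum_add_distrib]
  congr 1
  apply Finset.sum_congr rfl
  intro i _
  rw [← integral_add (hInt i A B) (hInt i C B)]
  congr 1; funext ω
  rw [mip_add_left]; ring

lemma ipL2_sub_left (A C B : Matrix (Fin m₁) (Fin m₂) ℝ) :
    ipL2 μ X (A - C) B = ipL2 μ X A B - ipL2 μ X C B := by
  have h : A - C = A + (-1 : ℝ) • C := by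
    rw [neg_one_smul]; exact sub_eq_add_neg A C
  rw [h, ipL2_add_left μ X hInt, ipL2_smul_left]; ring

omit hInt in
lemma nl2sq_nonneg (A : Matrix (Fin m₁) (Fin m₂) ℝ) : 0 ≤ nl2sq μ X A := by
  unfold nl2sq ipL2
  apply mul_nonneg (by positivity)
  apply Finset.sum_nonneg
  intro i _
  apply integral_nonneg
  intro ω
  exact mul_self_nonneg _

lemma nl2sq_expand (A U : Matrix (Fin m₁) (Fin m₂) ℝ) (t : ℝ) :
    nl2sq μ X (A + t • U) =
      nl2sq μ X A + 2 * t * ipL2 μ X A U + t ^ 2 * nl2sq μ X U := by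
  unfold nl2sq
  rw [ipL2_add_left μ X hInt, ipL2_smul_left]
  rw [ipL2_comm μ X A (A + t • U), ipL2_add_left μ X hInt, ipL2_smul_left]
  rw [ipL2_comm μ X U (A + t • U), ipL2_add_left μ X hInt, ipL2_smul_left]
  rw [ipL2_comm μ X U A]
  ring

end L2

section MESwap

variable {Ω : Type*} [MeasurableSpace Ω] {m₁ m₂ : ℕ} (μ : Measure Ω)

lemma mip_mE (Z : Ω → Matrix (Fin m₁) (Fin m₂) ℝ)
    (hZ : ∀ i j, Integrable (fun ω => Z ω i j) μ)
    (U : Matrix (Fin m₁) (Fin m₂) ℝ) :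
    mip (mE μ Z) U = ∫ ω, mip (Z ω) U ∂μ := by
  have h : ∀ ω, mip (Z ω) U = ∑ i, ∑ j, Z ω i j * U i j := fun ω => mip_eq _ _
  rw [mip_eq]
  rw [integral_congr_ae (Filter.EventuallyEq.of_eq (funext h))]
  rw [integral_finset_sum _ (fun i _ =>
    integrable_finset_sum _ (fun j _ => (hZ i j).mul_const (U i j)))]
  apply Finset.sum_congr rfl
  intro i _
  rw [integral_finset_sum _ (fun j _ => (hZ i j).mul_const (U i j))]
  apply Finset.sum_congr rfl
  intro j _
  rw [integral_mul_const]
  rfl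

end MESwap
section Key

variable {Ω : Type*} [MeasurableSpace Ω] {m₁ m₂ n : ℕ}

lemma key_identity (μ : Measure Ω) (X : Fin n → Ω → Matrix (Fin m₁) (Fin m₂) ℝ)
    (ξ : Fin n → Ω → ℝ)
    (hInt : ∀ (i : Fin n) (A B : Matrix (Fin m₁) (Fin m₂) ℝ),
      Integrable (fun ω => mip A (X i ω) * mip B (X i ω)) μ)
    (A₀ U : Matrix (Fin m₁) (Fin m₂) ℝ) (ω : Ω) :
    (1 / (n : ℝ)) * ∑ i, Yobs X ξ A₀ i ω * mip (X i ω) U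
      = ipL2 μ X A₀ U + mip (M1 X ξ ω + M2 μ X A₀ ω) U := by
  have hent : ∀ (i : Fin n) (j : Fin m₁) (k : Fin m₂),
      Integrable (fun ω' => (mip A₀ (X i ω') • X i ω') j k) μ := by
    intro i j k
    have h := hInt i A₀ (Matrix.single j k 1)
    have heq : (fun ω' => mip A₀ (X i ω') * mip (Matrix.single j k 1) (X i ω'))
        = fun ω' => (mip A₀ (X i ω') • X i ω') j k := by
      funext ω'
      rw [mip_single]
      simp [Matrix.smul_apply]
    rwa [heq] at h
  have hmE : ∀ i : Fin n,
      mip (mE μ (fun ω' => mip A₀ (X i ω') • X i ω')) U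
        = ∫ ω', mip A₀ (X i ω') * mip (X i ω') U ∂μ := by
    intro i
    rw [mip_mE μ _ (fun j k => hent i j k) U]
    congr 1
    funext ω'
    rw [mip_smul_left]
  have hM1 : mip (M1 X ξ ω) U = (1 / (n : ℝ)) * ∑ i, ξ i ω * mip (X i ω) U := by
    unfold M1
    rw [mip_smul_left, mip_sum_left]
    simp only [mip_smul_left]
  have hM2 : mip (M2 μ X A₀ ω) U
      = (1 / (n : ℝ)) * ∑ i, (mip A₀ (X i ω) * mip (X i ω) U
          - ∫ ω', mip A₀ (X i ω') * mip (X i ω') U ∂μ) := by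
    unfold M2
    rw [mip_smul_left, mip_sum_left]
    congr 1
    apply Finset.sum_congr rfl
    intro i _
    rw [mip_sub_left, mip_smul_left, hmE i]
  have hip : ipL2 μ X A₀ U
      = (1 / (n : ℝ)) * ∑ i, ∫ ω', mip A₀ (X i ω') * mip (X i ω') U ∂μ := by
    unfold ipL2
    congr 1
    apply Finset.sum_congr rfl
    intro i _
    congr 1
    funext ω'
    rw [mip_comm U (X i ω')]
  rw [mip_add_left, hM1, hM2, hip]
  simp only [Yobs, add_mul]
  rw [Finset.sum_add_distrib, Finset.sum_sub_distrib]
  ring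

lemma quad_bound {Q c lam : ℝ} (hQ : 0 ≤ Q)
    (H : ∀ t : ℝ, 0 ≤ t ^ 2 * Q + 2 * t * c + lam * |t|) : |c| ≤ lam / 2 := by
  have key : ∀ s : ℝ, 0 < s → 0 ≤ s * Q + 2 * c + lam ∧ 0 ≤ s * Q - 2 * c + lam := by
    intro s hs
    have h1 := H s
    have h2 := H (-s)
    rw [abs_of_pos hs] at h1
    rw [abs_neg, abs_of_pos hs] at h2
    constructor
    · nlinarith
    · nlinarith
  have keps : ∀ ε : ℝ, 0 < ε → 2 * c ≤ lam + ε ∧ -(lam + ε) ≤ 2 * c := by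
    intro ε hε
    have hs : 0 < ε / (Q + 1) := div_pos hε (by linarith)
    have hQs : (ε / (Q + 1)) * Q ≤ ε := by
      rw [div_mul_eq_mul_div, div_le_iff₀ (by linarith)]
      nlinarith
    obtain ⟨k1, k2⟩ := key _ hs
    constructor
    · linarith
    · linarith
  have hc1 : 2 * c ≤ lam := by
    by_contra hcon
    push_neg at hcon
    have hε : 0 < (2 * c - lam) / 2 := by linarith
    have := (keps _ hε).1
    linarith
  have hc2 : -lam ≤ 2 * c := by
    by_contra hcon
    push_neg at hcon
    have hε : 0 < (-(2 * c) - lam) / 2 := by linarith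
    have := (keps _ hε).2
    linarith
  rw [abs_le]
  constructor <;> linarith

end Key
/-- for every `U` with `‖U‖₁ = 1`,
`|⟨Â^λ - A₀, U⟩_{L₂(Π)}| ≤ ‖M₁ + M₂‖_∞ + λ/2`; consequently, on the event
`λ ≥ 3‖M₁ + M₂‖_∞`, `|⟨Â^λ - A₀, U⟩_{L₂(Π)}| ≤ (5/6) λ`. -/
theorem dual_norm_bound {m₁ m₂ n : ℕ} (hn : 0 < n)
    {Ω : Type*} [MeasurableSpace Ω] (μ : Measure Ω) [IsProbabilityMeasure μ]
    (X : Fin n → Ω → Matrix (Fin m₁) (Fin m₂) ℝ) (ξ : Fin n → Ω → ℝ)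
    (hmeasX : ∀ i, Measurable (X i)) (hmeasξ : ∀ i, Measurable (ξ i))
    (hInt : ∀ (i : Fin n) (A B : Matrix (Fin m₁) (Fin m₂) ℝ),
      Integrable (fun ω => mip A (X i ω) * mip B (X i ω)) μ)
    (hξmean : ∀ i, ∫ ω, ξ i ω ∂μ = 0)
    (A₀ : Matrix (Fin m₁) (Fin m₂) ℝ)
    (lam : ℝ) (hlam : 0 < lam)
    (Ahat : Ω → Matrix (Fin m₁) (Fin m₂) ℝ)
    (hmin : ∀ ω (A : Matrix (Fin m₁) (Fin m₂) ℝ),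
      obj μ X ξ A₀ lam ω (Ahat ω) ≤ obj μ X ξ A₀ lam ω A)
    (ω : Ω) (U : Matrix (Fin m₁) (Fin m₂) ℝ) (hU : nuc U = 1) :
    |ipL2 μ X (Ahat ω - A₀) U| ≤ spec (M1 X ξ ω + M2 μ X A₀ ω) + lam / 2 ∧
      (3 * spec (M1 X ξ ω + M2 μ X A₀ ω) ≤ lam →
        |ipL2 μ X (Ahat ω - A₀) U| ≤ (5 / 6) * lam) := by
  set M : Matrix (Fin m₁) (Fin m₂) ℝ := M1 X ξ ω + M2 μ X A₀ ω with hMdef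
  have e3 : mip ((2 / (n : ℝ)) • ∑ i, Yobs X ξ A₀ i ω • X i ω) U
      = 2 * (ipL2 μ X A₀ U + mip M U) := by
    rw [mip_smul_left, mip_sum_left]
    simp only [mip_smul_left]
    rw [show (2 / (n : ℝ)) = 2 * (1 / (n : ℝ)) by ring, mul_assoc,
      key_identity μ X ξ hInt A₀ U ω, hMdef]
  have H : ∀ t : ℝ, 0 ≤ t ^ 2 * nl2sq μ X U
      + 2 * t * (ipL2 μ X (Ahat ω - A₀) U - mip M U) + lam * |t| := by
    intro t
    have hobj : obj μ X ξ A₀ lam ω (Ahat ω + t • U) - obj μ X ξ A₀ lam ω (Ahat ω)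
        = t ^ 2 * nl2sq μ X U + 2 * t * (ipL2 μ X (Ahat ω - A₀) U - mip M U)
          + lam * (nuc (Ahat ω + t • U) - nuc (Ahat ω)) := by
      unfold obj
      rw [nl2sq_expand μ X hInt (Ahat ω) U t,
        mip_add_right _ (Ahat ω) (t • U), mip_smul_right, e3,
        ipL2_sub_left μ X hInt (Ahat ω) A₀ U]
      ring
    have h0 : 0 ≤ obj μ X ξ A₀ lam ω (Ahat ω + t • U) - obj μ X ξ A₀ lam ω (Ahat ω) :=
      sub_nonneg.2 (hmin ω _)
    rw [hobj] at h0
    have hnuc : nuc (Ahat ω + t • U) - nuc (Ahat ω) ≤ |t| := by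
      have h := nuc_add_smul_le (Ahat ω) U t
      rw [hU, mul_one] at h
      linarith
    have hlnuc : lam * (nuc (Ahat ω + t • U) - nuc (Ahat ω)) ≤ lam * |t| :=
      mul_le_mul_of_nonneg_left hnuc hlam.le
    linarith
  have hqb : |ipL2 μ X (Ahat ω - A₀) U - mip M U| ≤ lam / 2 :=
    quad_bound (nl2sq_nonneg μ X U) H
  have hspec : |mip M U| ≤ spec M := by
    rw [mip_comm]
    exact abs_mip_le_spec_of_nuc_one hU M
  have hDb : |ipL2 μ X (Ahat ω - A₀) U| ≤ spec M + lam / 2 := by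
    have h := abs_add_le (ipL2 μ X (Ahat ω - A₀) U - mip M U) (mip M U)
    rw [sub_add_cancel] at h
    linarith
  refine ⟨hDb, fun h3 => ?_⟩
  linarith [spec_nonneg M]

end MC
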